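/- Let p : ℝⁿ → ℝ be quasiconvex, continuous, and homogeneous of even degree d ≥ 2, and suppose p(a) > 0 and p(b) > 0. Then p(a+b) ≤ (p(a)^{1/d} + p(b)^{1/d})^d. -/

import Mathlib

theorem stmt_5 (n d : ℕ) (p : (Fin n → ℝ) → ℝ) (hp : Continuous p)
    (hd : Even d) (hd2 : 2 ≤ d)
    (hhom : ∀ (c : ℝ) (x : Fin n → ℝ), p (c • x) = c ^ d * p x)
    (hq : ∀ α : ℝ, Convex ℝ {x : Fin n → ℝ | p x ≤ α})
    (a b : Fin n → ℝ) (ha : 0 < p a) (hb : 0 < p b) :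
    p (a + b) ≤ (p a ^ ((1 : ℝ) / d) + p b ^ ((1 : ℝ) / d)) ^ d := by
  have hdne : (d : ℝ) ≠ 0 := by positivity
  set α := p a ^ ((1 : ℝ) / d) with hα
  set β := p b ^ ((1 : ℝ) / d) with hβ
  have hαpos : 0 < α := Real.rpow_pos_of_pos ha _
  have hβpos : 0 < β := Real.rpow_pos_of_pos hb _
  have hαd : α ^ d = p a := by
    rw [hα, ← Real.rpow_natCast (p a ^ ((1:ℝ)/d)) d, ← Real.rpow_mul ha.le]
    field_simp
    simp
  have hβd : β ^ d = p b := by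
    rw [hβ, ← Real.rpow_natCast (p b ^ ((1:ℝ)/d)) d, ← Real.rpow_mul hb.le]
    field_simp
    simp
  have hsum : 0 < α + β := by linarith
  have ha' : p ((1/α) • a) ≤ 1 := by
    rw [hhom, one_div, inv_pow, ← hαd]
    rw [inv_mul_cancel₀ (by positivity)]
  have hb' : p ((1/β) • b) ≤ 1 := by
    rw [hhom, one_div, inv_pow, ← hβd]
    rw [inv_mul_cancel₀ (by positivity)]
  have hconv := hq 1
  have hmem := hconv ha' hb' (by positivity : (0:ℝ) ≤ α/(α+β))
    (by positivity : (0:ℝ) ≤ β/(α+β)) (by field_simp)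
  have heq : (α/(α+β)) • ((1/α) • a) + (β/(α+β)) • ((1/β) • b)
      = (1/(α+β)) • (a + b) := by
    rw [smul_smul, smul_smul, smul_add]
    congr 1 <;> congr 1 <;> (field_simp)
  rw [heq] at hmem
  simp only [Set.mem_setOf_eq] at hmem
  have := hhom (1/(α+β)) (a+b)
  rw [this] at hmem
  have h1 : p (a + b) ≤ (α+β)^d := by
    have hpow : (0:ℝ) < (α+β)^d := by positivity
    rw [one_div, inv_pow] at hmem
    calc p (a+b) = (α+β)^d * (((α+β)^d)⁻¹ * p (a+b)) := by field_simp
    _ ≤ (α+β)^d * 1 := by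
        apply mul_le_mul_of_nonneg_left hmem hpow.le
    _ = (α+β)^d := mul_one _
  exact h1
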